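/- Let F : M → N be a smooth surjective submersion and let μ : M → ℝ be a continuous function. Then there exists a continuous function ν : N → ℝ such that for every m ∈ M with the property that μ is constant on the fiber F⁻¹({F(m)}), one has ν(F(m)) = μ(m). -/

import Mathlib

open scoped Manifold
open Filter Set Topology


theorem submersion_isOpenMap_aux
    {EM : Type*} [NormedAddCommGroup EM] [NormedSpace ℝ EM] [FiniteDimensional ℝ EM]
    {HM : Type*} [TopologicalSpace HM] {IM : ModelWithCorners ℝ EM HM} [IM.Boundaryless]
    {M : Type*} [TopologicalSpace M] [ChartedSpace HM M] [IsManifold IM (⊤ : ℕ∞) M]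
    {EN : Type*} [NormedAddCommGroup EN] [NormedSpace ℝ EN] [FiniteDimensional ℝ EN]
    {HN : Type*} [TopologicalSpace HN] {IN : ModelWithCorners ℝ EN HN} [IN.Boundaryless]
    {N : Type*} [TopologicalSpace N] [ChartedSpace HN N] [IsManifold IN (⊤ : ℕ∞) N]
    (F : M → N) (hF : ContMDiff IM IN (⊤ : ℕ∞) F)
    (hFsub : ∀ m : M, Function.Surjective (mfderiv IM IN F m)) :
    IsOpenMap F := by
  refine IsOpenMap.of_nhds_le fun m => ?_
  set φ := extChartAt IM m with hφdef
  set ψ := extChartAt IN (F m) with hψdef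
  set x₀ := φ m with hx₀
  set g : EM → EN := ψ ∘ F ∘ φ.symm with hg
  have hφ : Filter.map φ (𝓝 m) = 𝓝 x₀ := map_extChartAt_nhds_of_boundaryless m
  have hφsymm : Filter.map φ.symm (𝓝 x₀) = 𝓝 m := by
    have h1 : (φ.symm ∘ φ) =ᶠ[𝓝 m] id := by
      filter_upwards [extChartAt_source_mem_nhds (I := IM) m] with y hy
      exact φ.left_inv hy
    rw [← hφ, Filter.map_map, Filter.map_congr h1, Filter.map_id]
  have hψsymm : Filter.map ψ.symm (𝓝 (ψ (F m))) = 𝓝 (F m) := by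
    have h2 : Filter.map ψ (𝓝 (F m)) = 𝓝 (ψ (F m)) :=
      map_extChartAt_nhds_of_boundaryless (F m)
    have h1 : (ψ.symm ∘ ψ) =ᶠ[𝓝 (F m)] id := by
      filter_upwards [extChartAt_source_mem_nhds (I := IN) (F m)] with y hy
      exact ψ.left_inv hy
    rw [← h2, Filter.map_map, Filter.map_congr h1, Filter.map_id]
  have hcd := (contMDiffAt_iff.1 (hF m)).2
  rw [IM.range_eq_univ, contDiffWithinAt_univ] at hcd
  have hmd : MDifferentiableAt IM IN F m := (hF m).mdifferentiableAt (by simp)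
  have heq : (mfderiv IM IN F m : EM →L[ℝ] EN) = fderiv ℝ g x₀ := by
    rw [hmd.mfderiv, IM.range_eq_univ, fderivWithin_univ]
    rfl
  have hst : HasStrictFDerivAt g (fderiv ℝ g x₀) x₀ := hcd.hasStrictFDerivAt (by simp)
  have hrange : LinearMap.range (fderiv ℝ g x₀ : EM →ₗ[ℝ] EN) = ⊤ := by
    rw [← heq]
    exact LinearMap.range_eq_top.mpr (hFsub m)
  have hmapg : Filter.map g (𝓝 x₀) = 𝓝 (g x₀) := hst.map_nhds_eq_of_surj hrange
  have hmφ : φ.symm x₀ = m := φ.left_inv (mem_extChartAt_source m)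
  have hgx₀ : g x₀ = ψ (F m) := by simp [hg, hmφ]
  have hcont : ContinuousAt (F ∘ φ.symm) x₀ := by
    apply ContinuousAt.comp
    · rw [hmφ]; exact (hF m).continuousAt
    · exact continuousAt_extChartAt_symm m
  have hEv : (ψ.symm ∘ g) =ᶠ[𝓝 x₀] (F ∘ φ.symm) := by
    have hsrc : (F ∘ φ.symm) ⁻¹' ψ.source ∈ 𝓝 x₀ := by
      apply hcont.preimage_mem_nhds
      rw [Function.comp_apply, hmφ]
      exact extChartAt_source_mem_nhds (I := IN) (F m)
    filter_upwards [hsrc] with y hy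
    exact ψ.left_inv hy
  have : 𝓝 (F m) = Filter.map F (𝓝 m) := by
    calc 𝓝 (F m) = Filter.map ψ.symm (Filter.map g (𝓝 x₀)) := by rw [hmapg, hgx₀, hψsymm]
      _ = Filter.map (ψ.symm ∘ g) (𝓝 x₀) := Filter.map_map
      _ = Filter.map (F ∘ φ.symm) (𝓝 x₀) := Filter.map_congr hEv
      _ = Filter.map F (𝓝 m) := by rw [← Filter.map_map, hφsymm]
  exact this.le


theorem main_aux
    {M : Type*} [TopologicalSpace M]
    {N : Type*} [TopologicalSpace N] [NormalSpace N]
    (F : M → N) (hopen : IsOpenMap F) (hFsurj : Function.Surjective F)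
    (μ : M → ℝ) (hμ : Continuous μ) :
    ∃ ν : N → ℝ, Continuous ν ∧
      ∀ m : M, (∀ m' : M, F m' = F m → μ m' = μ m) → ν (F m) = μ m := by
  classical
  set A : Set N := {n | ∀ p p' : M, F p = n → F p' = n → μ p = μ p'} with hA
  set σ : N → M := Function.surjInv hFsurj with hσdef
  have hσ : ∀ n, F (σ n) = n := Function.surjInv_eq hFsurj
  have hAclosed : IsClosed A := by
    rw [← isOpen_compl_iff, isOpen_iff_mem_nhds]
    intro n hn
    simp only [mem_compl_iff, hA, mem_setOf_eq] at hn
    push_neg at hn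
    obtain ⟨p, p', hp, hp', hne⟩ := hn
    set r := dist (μ p) (μ p') / 2 with hr
    have hrpos : 0 < r := by
      have := dist_pos.2 hne
      positivity
    have hU : IsOpen (F '' (μ ⁻¹' Metric.ball (μ p) r)) :=
      hopen _ (Metric.isOpen_ball.preimage hμ)
    have hU' : IsOpen (F '' (μ ⁻¹' Metric.ball (μ p') r)) :=
      hopen _ (Metric.isOpen_ball.preimage hμ)
    have hmem : n ∈ F '' (μ ⁻¹' Metric.ball (μ p) r) :=
      ⟨p, by simp [Metric.mem_ball, hrpos], hp⟩
    have hmem' : n ∈ F '' (μ ⁻¹' Metric.ball (μ p') r) :=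
      ⟨p', by simp [Metric.mem_ball, hrpos], hp'⟩
    refine Filter.mem_of_superset
      (Filter.inter_mem (hU.mem_nhds hmem) (hU'.mem_nhds hmem')) ?_
    rintro q ⟨⟨a, ha, haq⟩, ⟨b, hb, hbq⟩⟩
    simp only [mem_compl_iff, hA, mem_setOf_eq]
    push_neg
    refine ⟨a, b, haq, hbq, ?_⟩
    intro hab
    rw [Set.mem_preimage, Metric.mem_ball] at ha hb
    rw [hab] at ha
    have htri := dist_triangle (μ p) (μ b) (μ p')
    rw [dist_comm (μ p) (μ b)] at htri
    rw [hr] at ha hb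
    linarith
  have hν₀ : Continuous (fun a : A => μ (σ a.1)) := by
    rw [continuous_iff_continuousAt]
    intro a
    rw [Metric.continuousAt_iff']
    intro ε hε
    have hUopen : IsOpen (F '' (μ ⁻¹' Metric.ball (μ (σ a.1)) ε)) :=
      hopen _ (Metric.isOpen_ball.preimage hμ)
    have hmem : (a : N) ∈ F '' (μ ⁻¹' Metric.ball (μ (σ a.1)) ε) :=
      ⟨σ a.1, by simp [Metric.mem_ball, hε], hσ _⟩
    have hnhds : Subtype.val ⁻¹' (F '' (μ ⁻¹' Metric.ball (μ (σ a.1)) ε)) ∈ 𝓝 a :=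
      continuous_subtype_val.continuousAt.preimage_mem_nhds (hUopen.mem_nhds hmem)
    filter_upwards [hnhds] with b hb
    obtain ⟨p, hpU, hpF⟩ := hb
    have hbp : μ (σ b.1) = μ p := b.2 _ _ (hσ _) hpF
    rw [hbp]
    rw [Set.mem_preimage, Metric.mem_ball] at hpU
    exact hpU
  obtain ⟨ν, hν⟩ := ContinuousMap.exists_restrict_eq hAclosed
    (⟨fun a : A => μ (σ a.1), hν₀⟩ : C(A, ℝ))
  refine ⟨ν, ν.continuous, fun m hm => ?_⟩
  have hmA : F m ∈ A := by
    intro p p' hp hp'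
    rw [hm p hp, hm p' hp']
  have hval : ν (F m) = μ (σ (F m)) := ContinuousMap.congr_fun hν ⟨F m, hmA⟩
  rw [hval, hm (σ (F m)) (hσ _)]

/-- Lemma about the extension of a function (continuous version): if `F : M → N` is a smooth
surjective submersion between finite-dimensional smooth manifolds without boundary and
`μ : M → ℝ` is continuous, then there is a continuous function `ν : N → ℝ` such that
`ν (F m) = μ m` whenever `μ` is constant on the fiber of `F` through `m`. -/
theorem extension_of_function_continuous
    {EM : Type*} [NormedAddCommGroup EM] [NormedSpace ℝ EM] [FiniteDimensional ℝ EM]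
    {HM : Type*} [TopologicalSpace HM] {IM : ModelWithCorners ℝ EM HM} [IM.Boundaryless]
    {M : Type*} [TopologicalSpace M] [ChartedSpace HM M] [IsManifold IM (⊤ : ℕ∞) M]
    [T2Space M] [SecondCountableTopology M]
    {EN : Type*} [NormedAddCommGroup EN] [NormedSpace ℝ EN] [FiniteDimensional ℝ EN]
    {HN : Type*} [TopologicalSpace HN] {IN : ModelWithCorners ℝ EN HN} [IN.Boundaryless]
    {N : Type*} [TopologicalSpace N] [ChartedSpace HN N] [IsManifold IN (⊤ : ℕ∞) N]
    [T2Space N] [SecondCountableTopology N]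
    (F : M → N) (hF : ContMDiff IM IN (⊤ : ℕ∞) F) (hFsurj : Function.Surjective F)
    (hFsub : ∀ m : M, Function.Surjective (mfderiv IM IN F m))
    (μ : M → ℝ) (hμ : Continuous μ) :
    ∃ ν : N → ℝ, Continuous ν ∧
      ∀ m : M, (∀ m' : M, F m' = F m → μ m' = μ m) → ν (F m) = μ m := by
  haveI : LocallyCompactSpace N := Manifold.locallyCompact_of_finiteDimensional IN
  haveI : TopologicalSpace.MetrizableSpace N := Manifold.metrizableSpace IN N
  letI : MetricSpace N := TopologicalSpace.metrizableSpaceMetric N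
  exact main_aux F (submersion_isOpenMap_aux F hF hFsub) hFsurj μ hμ
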